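/- If (a,b,c) is a primitive solution of a² + 2b² = c² (i.e., gcd(a,b)=1) and p is a prime dividing c, then there exist integers u, v with p = u² + 2v². -/

import Mathlib

lemma sq_bmod_le (x : ℤ) (m : ℕ) (hm : 0 < m) : 4 * (Int.bmod x m)^2 ≤ (m:ℤ)^2 := by
  have h1 := Int.bmod_le (x := x) hm
  have h2 := Int.le_bmod (x := x) hm
  have h3 : -(m:ℤ) ≤ 2 * Int.bmod x m ∧ 2 * Int.bmod x m ≤ (m:ℤ) := by omega
  nlinarith [h3.1, h3.2]

lemma bmod_modEq (x : ℤ) (m : ℕ) : Int.bmod x m ≡ x [ZMOD (m:ℤ)] := Int.bmod_emod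

lemma descent (p : ℕ) (hp : Nat.Prime p) :
    ∀ m : ℕ, 0 < m → (m:ℤ) < p → ∀ x y : ℤ,
      (m:ℤ) * p = x^2 + 2*y^2 → ∃ u v : ℤ, (p:ℤ) = u^2 + 2*v^2 := by
  intro m
  induction m using Nat.strong_induction_on with
  | _ m ih =>
  intro hm hmp x y hxy
  by_cases hm1 : m = 1
  · subst hm1
    exact ⟨x, y, by simpa using hxy⟩
  · have hm2 : 2 ≤ m := by omega
    set x' := Int.bmod x m with hx'
    set y' := Int.bmod y m with hy'
    have hxc : x' ≡ x [ZMOD (m:ℤ)] := bmod_modEq x m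
    have hyc : y' ≡ y [ZMOD (m:ℤ)] := bmod_modEq y m
    have hdvd0 : (m:ℤ) ∣ x^2 + 2*y^2 := ⟨(p:ℤ), hxy.symm⟩
    have hcong : x'^2 + 2*y'^2 ≡ x^2 + 2*y^2 [ZMOD (m:ℤ)] :=
      (hxc.pow 2).add ((Int.ModEq.refl 2).mul (hyc.pow 2))
    have hdvd : (m:ℤ) ∣ x'^2 + 2*y'^2 := by
      have h2 := hcong.dvd
      simpa using dvd_sub hdvd0 h2
    obtain ⟨k, hk⟩ := hdvd
    have hbx := sq_bmod_le x m (by omega)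
    have hby := sq_bmod_le y m (by omega)
    have hmpos : (0:ℤ) < m := by exact_mod_cast hm
    have hk0 : 0 ≤ k := by nlinarith [sq_nonneg x', sq_nonneg y']
    have hklt : k < m := by nlinarith
    have hkpos : 0 < k := by
      rcases hk0.lt_or_eq with hlt | heq
      · exact hlt
      · exfalso
        have hzero : x' = 0 ∧ y' = 0 := by
          constructor <;> nlinarith [sq_nonneg x', sq_nonneg y']
        have hmx : (m:ℤ) ∣ x := (Int.modEq_zero_iff_dvd).mp ((hzero.1 ▸ hxc).symm)
        have hmy : (m:ℤ) ∣ y := (Int.modEq_zero_iff_dvd).mp ((hzero.2 ▸ hyc).symm)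
        obtain ⟨x0, hx0⟩ := hmx
        obtain ⟨y0, hy0⟩ := hmy
        have hmp' : (m:ℤ) ∣ (p:ℤ) := by
          have hsq : (m:ℤ) * p = (m:ℤ) * ((m:ℤ) * (x0^2 + 2*y0^2)) := by
            rw [hxy, hx0, hy0]; ring
          have := mul_left_cancel₀ (ne_of_gt hmpos) hsq
          exact Dvd.intro _ this.symm
        have hmdvdp : m ∣ p := by exact_mod_cast hmp'
        rcases (Nat.Prime.eq_one_or_self_of_dvd hp m hmdvdp) with h1 | h1
        · omega
        · subst h1; exact absurd hmp (lt_irrefl _)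
    set A := x*x' + 2*y*y' with hA
    set B := x*y' - y*x' with hB
    have hmA : (m:ℤ) ∣ A := by
      have hc2 : A ≡ x*x + 2*y*y [ZMOD (m:ℤ)] :=
        ((Int.ModEq.refl x).mul hxc).add ((Int.ModEq.refl (2*y)).mul hyc)
      have hd2 : (m:ℤ) ∣ x*x + 2*y*y := by
        have : x*x + 2*y*y = x^2 + 2*y^2 := by ring
        rw [this]; exact hdvd0
      simpa using dvd_sub hd2 hc2.dvd
    have hmB : (m:ℤ) ∣ B := by
      have h1 : B ≡ x*y - y*x [ZMOD (m:ℤ)] :=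
        ((Int.ModEq.refl x).mul hyc).sub ((Int.ModEq.refl y).mul hxc)
      have h2 : (m:ℤ) ∣ -B := by simpa [mul_comm] using h1.dvd
      exact (dvd_neg).mp h2
    obtain ⟨A', hA'⟩ := hmA
    obtain ⟨B', hB'⟩ := hmB
    have hcomp : (x^2 + 2*y^2) * (x'^2 + 2*y'^2) = A^2 + 2*B^2 := by rw [hA, hB]; ring
    have hkey : (m:ℤ)^2 * (k * p) = (m:ℤ)^2 * (A'^2 + 2*B'^2) := by
      have e1 : (m:ℤ) * p * ((m:ℤ) * k) = ((m:ℤ)*A')^2 + 2*((m:ℤ)*B')^2 := by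
        rw [hxy, ← hk, ← hA', ← hB']; exact hcomp
      linear_combination e1
    have hkp : k * p = A'^2 + 2*B'^2 :=
      mul_left_cancel₀ (pow_ne_zero 2 (ne_of_gt hmpos)) hkey
    have hkn : ((k.toNat : ℤ)) = k := Int.toNat_of_nonneg hk0
    refine ih k.toNat (by omega) (by omega) (by omega) A' B' (by rw [hkn]; exact hkp)

theorem stmt_0 (a b c : ℤ) (hc : 0 < c) (h : a^2 + 2*b^2 = c^2)
    (hprim : Int.gcd a b = 1) (p : ℕ) (hp : Nat.Prime p) (hpc : (p : ℤ) ∣ c) :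
    ∃ u v : ℤ, (p : ℤ) = u^2 + 2*v^2 := by
  haveI : Fact (Nat.Prime p) := ⟨hp⟩
  have hpZ : Prime (p:ℤ) := Nat.prime_iff_prime_int.mp hp
  -- p does not divide b
  have hpb : ¬ (p:ℤ) ∣ b := by
    intro hb
    have hpa : (p:ℤ) ∣ a := by
      have h1 : (p:ℤ) ∣ a^2 := by
        have : a^2 = c^2 - 2*b^2 := by linarith
        rw [this]
        exact dvd_sub (Dvd.dvd.pow hpc (by norm_num)) (Dvd.dvd.mul_left (Dvd.dvd.pow hb (by norm_num)) 2)
      exact hpZ.dvd_of_dvd_pow h1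
    have : (p:ℤ) ∣ (Int.gcd a b : ℤ) := Int.dvd_coe_gcd hpa hb
    rw [hprim] at this
    have := Int.le_of_dvd one_pos this
    have := hp.one_lt
    omega
  -- find r with p ∣ r^2 + 2
  have hb0 : (b : ZMod p) ≠ 0 := by
    rw [Ne, ZMod.intCast_zmod_eq_zero_iff_dvd]
    exact hpb
  have hc0 : (c : ZMod p) = 0 := by
    rw [ZMod.intCast_zmod_eq_zero_iff_dvd]
    exact hpc
  have hz : ((a : ZMod p) * (b : ZMod p)⁻¹)^2 + 2 = 0 := by
    have hcast : (a : ZMod p)^2 + 2*(b : ZMod p)^2 = (c : ZMod p)^2 := by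
      have := congrArg (fun t : ℤ => (t : ZMod p)) h
      push_cast at this
      exact this
    rw [hc0] at hcast
    field_simp
    linear_combination hcast
  set z : ZMod p := (a : ZMod p) * (b : ZMod p)⁻¹ with hzdef
  set r : ℤ := (z.val : ℤ) with hr
  have hpr : (p:ℤ) ∣ r^2 + 2 := by
    rw [← ZMod.intCast_zmod_eq_zero_iff_dvd]
    push_cast
    simp only [hr]
    push_cast
    rw [ZMod.natCast_val, ZMod.cast_id]
    exact hz
  -- reduce r mod p
  set x : ℤ := Int.bmod r p with hx
  have hxr : x ≡ r [ZMOD (p:ℤ)] := bmod_modEq r p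
  have hpx : (p:ℤ) ∣ x^2 + 2 := by
    have hcong : x^2 + 2 ≡ r^2 + 2 [ZMOD (p:ℤ)] := (hxr.pow 2).add_right 2
    have h2 := dvd_sub hpr hcong.dvd
    have h3 : r ^ 2 + 2 - (r ^ 2 + 2 - (x ^ 2 + 2)) = x^2 + 2 := by ring
    rw [← h3]
    simpa [add_comm] using h2
  obtain ⟨k, hk⟩ := hpx
  have hppos : (0:ℤ) < p := by exact_mod_cast hp.pos
  have hbnd := sq_bmod_le r p hp.pos
  have hk0 : 0 < k := by nlinarith [sq_nonneg x]
  have hklt : k < p := by nlinarith [hp.two_le, sq_nonneg ((p:ℤ) - 2)]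
  have hkn : ((k.toNat : ℤ)) = k := Int.toNat_of_nonneg hk0.le
  refine descent p hp k.toNat (by omega) (by omega) x 1 ?_
  rw [hkn]
  linear_combination -hk
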